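/- arXiv:2604.07697 — 5 statements merged into one kernel-verified Lean document; each statement's English description precedes it below -/
import Mathlib

section
/- For every H ∈ (0, 1/2) there exists a constant c_H > 0 such that for all x ∈ ℝ, ∫_{|y|>1} |y|^{2H-2} · min(1, |x+y|^{2H-2}) dy ≤ c_H · min(1, |x|^{2H-2}). -/
open MeasureTheory Real

/-- `min (1, |x|^(2H-2))`, interpreted as `1` when `x = 0`. -/
noncomputable def minPow (H x : ℝ) : ℝ := if x = 0 then 1 else min 1 (|x| ^ (2 * H - 2))

theorem integral_abs_rpow_min_le (H : ℝ) (hH : H ∈ Set.Ioo (0:ℝ) (1/2)) :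
    ∃ c : ℝ, 0 < c ∧ ∀ x : ℝ,
      (∫ y in {y : ℝ | 1 < |y|}, |y| ^ (2 * H - 2) * minPow H (x + y)) ≤
        c * minPow H x := by
  obtain ⟨hH0, hH1⟩ := hH
  set p : ℝ := 2 * H - 2 with hp_def
  have hp : p < -1 := by simp only [hp_def]; linarith
  have hp0 : p < 0 := by linarith
  set g : ℝ → ℝ := fun z => min 1 (|z| ^ p) with hg_def
  have hg0 : ∀ z, 0 ≤ g z := fun z => le_min zero_le_one (rpow_nonneg (abs_nonneg z) p)
  have hg1 : ∀ z, g z ≤ 1 := fun z => min_le_left _ _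
  have hgm : Measurable g :=
    measurable_const.min ((continuous_abs.measurable).pow measurable_const)
  set S : Set ℝ := {y : ℝ | 1 < |y|} with hS_def
  have hS : MeasurableSet S := measurableSet_lt measurable_const continuous_abs.measurable
  -- integrability of |y|^p on S
  have hIoi : IntegrableOn (fun y : ℝ => |y| ^ p) (Set.Ioi 1) := by
    refine (integrableOn_Ioi_rpow_of_lt hp one_pos).congr_fun ?_ measurableSet_Ioi
    intro y hy
    simp only [abs_of_pos (show (0:ℝ) < y from lt_trans one_pos hy)]
  have hIio : IntegrableOn (fun y : ℝ => |y| ^ p) (Set.Iio (-1)) := by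
    have m : MeasurableEmbedding (fun x : ℝ => -x) := (Homeomorph.neg ℝ).measurableEmbedding
    rw [show (volume : Measure ℝ) = Measure.map (fun x : ℝ => -x) volume from
      (Measure.map_neg_eq_self _).symm, m.integrableOn_map_iff]
    simpa [Function.comp_def, Set.neg_preimage, Set.neg_Iio] using hIoi
  have hSdecomp : S = Set.Iio (-1) ∪ Set.Ioi 1 := by
    ext y
    simp only [hS_def, Set.mem_setOf_eq, Set.mem_union, Set.mem_Iio, Set.mem_Ioi, lt_abs,
      lt_neg]
    tauto
  have hI0 : IntegrableOn (fun y : ℝ => |y| ^ p) S := by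
    rw [hSdecomp]; exact hIio.union hIoi
  set C₀ : ℝ := ∫ y in S, |y| ^ p with hC0_def
  have hC0nn : 0 ≤ C₀ :=
    setIntegral_nonneg hS fun y _ => rpow_nonneg (abs_nonneg y) p
  -- integrability of g on ℝ
  have hGint : Integrable g := by
    have huniv : (Set.univ : Set ℝ) = {y : ℝ | |y| ≤ 1} ∪ S := by
      ext y; simp [hS_def, le_or_gt]
    rw [← integrableOn_univ, huniv]
    apply IntegrableOn.union
    · have hsub : {y : ℝ | |y| ≤ 1} ⊆ Set.Icc (-1 : ℝ) 1 := fun y hy => abs_le.1 hy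
      have hconst : IntegrableOn (fun _ : ℝ => (1:ℝ)) {y : ℝ | |y| ≤ 1} :=
        integrableOn_const (lt_of_le_of_lt (measure_mono hsub) measure_Icc_lt_top).ne
      refine Integrable.mono' hconst hgm.aestronglyMeasurable.restrict
        (ae_of_all _ fun y => ?_)
      rw [Real.norm_eq_abs, abs_of_nonneg (hg0 y)]; exact hg1 y
    · refine Integrable.mono' hI0 hgm.aestronglyMeasurable.restrict ?_
      refine (ae_restrict_iff' hS).2 (ae_of_all _ fun y _ => ?_)
      rw [Real.norm_eq_abs, abs_of_nonneg (hg0 y)]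
      exact min_le_right _ _
  set C₁ : ℝ := ∫ z, g z with hC1_def
  have hC1nn : 0 ≤ C₁ := integral_nonneg hg0
  set K : ℝ := ((2:ℝ)⁻¹) ^ p with hK_def
  have hKpos : 0 < K := rpow_pos_of_pos (by norm_num) p
  refine ⟨K * (C₀ + C₁) + C₀ + 1, by positivity, fun x => ?_⟩
  set c : ℝ := K * (C₀ + C₁) + C₀ + 1 with hc_def
  set F : ℝ → ℝ := fun y => |y| ^ p * g (x + y) with hF_def
  have hFm : Measurable F :=
    ((continuous_abs.measurable).pow measurable_const).mul
      (hgm.comp (measurable_const.add measurable_id))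
  have hFle : ∀ y, F y ≤ |y| ^ p := fun y =>
    mul_le_of_le_one_right (rpow_nonneg (abs_nonneg y) p) (hg1 _)
  have hFnn : ∀ y, 0 ≤ F y := fun y =>
    mul_nonneg (rpow_nonneg (abs_nonneg y) p) (hg0 _)
  have hFint : IntegrableOn F S := by
    refine Integrable.mono' hI0 hFm.aestronglyMeasurable.restrict (ae_of_all _ fun y => ?_)
    rw [Real.norm_eq_abs, abs_of_nonneg (hFnn y)]
    exact hFle y
  -- replace minPow by g inside the integral
  have hcongr : (∫ y in S, |y| ^ p * minPow H (x + y)) = ∫ y in S, F y := by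
    refine integral_congr_ae ?_
    have hae : ∀ᵐ (y : ℝ) ∂(volume.restrict S), y ≠ -x := by
      refine ae_restrict_of_ae ?_
      rw [ae_iff]
      have : {y : ℝ | ¬ y ≠ -x} = {-x} := by ext y; simp
      rw [this]
      exact measure_singleton _
    filter_upwards [hae] with y hy
    have hxy : x + y ≠ 0 := fun h => hy (by linarith)
    simp only [hF_def, minPow, if_neg hxy]; rfl
  rw [hcongr]
  -- the universal bound
  have hB0 : (∫ y in S, F y) ≤ C₀ :=
    setIntegral_mono_on hFint hI0 hS fun y _ => hFle y
  rcases le_or_gt |x| 1 with hx | hx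
  · -- |x| ≤ 1 : minPow H x = 1
    have hmp : minPow H x = 1 := by
      rcases eq_or_ne x 0 with rfl | hx0
      · simp [minPow]
      · have h1 : (1:ℝ) ≤ |x| ^ p :=
          one_le_rpow_of_pos_of_le_one_of_nonpos (abs_pos.2 hx0) hx hp0.le
        simp [minPow, if_neg hx0, min_eq_left h1]; exact h1
    rw [hmp, mul_one]
    calc (∫ y in S, F y) ≤ C₀ := hB0
    _ ≤ c := by simp only [hc_def]; nlinarith [mul_nonneg hKpos.le (add_nonneg hC0nn hC1nn)]
  · -- 1 < |x|
    have hx0 : x ≠ 0 := fun h => by simp [h] at hx; linarith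
    have hmp : minPow H x = |x| ^ p := by
      have h1 : |x| ^ p ≤ 1 := rpow_le_one_of_one_le_of_nonpos hx.le hp0.le
      simp [minPow, if_neg hx0, min_eq_right h1]; exact min_eq_right h1
    set R : ℝ := |x| / 2 with hR_def
    have hRpos : 0 < R := by
      have : (0:ℝ) < |x| := lt_trans one_pos hx
      positivity
    have hRp : R ^ p = K * |x| ^ p := by
      rw [hR_def, div_eq_mul_inv, mul_rpow (abs_nonneg x) (by norm_num), mul_comm]
    set A : Set ℝ := {y : ℝ | |y| ≤ R} with hA_def
    set B : Set ℝ := {y : ℝ | R < |y|} with hB_def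
    have hAm : MeasurableSet A := measurableSet_le continuous_abs.measurable measurable_const
    have hBm : MeasurableSet B := measurableSet_lt measurable_const continuous_abs.measurable
    have hdisj : Disjoint (S ∩ A) (S ∩ B) := by
      refine Set.disjoint_left.2 fun y hy1 hy2 => ?_
      have h1 : |y| ≤ R := hy1.2
      have h2 : R < |y| := hy2.2
      exact absurd h2 (not_lt.2 h1)
    have hsplit : S = (S ∩ A) ∪ (S ∩ B) := by
      rw [← Set.inter_union_distrib_left]
      have : A ∪ B = Set.univ := by
        ext y; simp [hA_def, hB_def, le_or_gt]
      rw [this, Set.inter_univ]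
    have hIntA : IntegrableOn F (S ∩ A) := hFint.mono_set Set.inter_subset_left
    have hIntB : IntegrableOn F (S ∩ B) := hFint.mono_set Set.inter_subset_left
    have hsum : (∫ y in S, F y) = (∫ y in S ∩ A, F y) + ∫ y in S ∩ B, F y := by
      rw [← setIntegral_union hdisj (hS.inter hBm) hIntA hIntB, ← hsplit]
    -- bound on S ∩ A
    have hboundA : (∫ y in S ∩ A, F y) ≤ C₀ * (K * |x| ^ p) := by
      have hpt : ∀ y ∈ S ∩ A, F y ≤ |y| ^ p * (K * |x| ^ p) := by
        rintro y ⟨hyS, hyA⟩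
        have h1 : R ≤ |x + y| := by
          have h2 : |x| ≤ |x + y| + |y| := by
            have := abs_add_le (x + y) (-y)
            simpa [abs_neg] using this
          have h3 : |y| ≤ R := hyA
          simp only [hR_def] at *
          linarith
        have h4 : |x + y| ^ p ≤ R ^ p :=
          rpow_le_rpow_of_nonpos hRpos h1 hp0.le
        have h5 : g (x + y) ≤ K * |x| ^ p := by
          calc g (x + y) ≤ |x + y| ^ p := min_le_right _ _
          _ ≤ R ^ p := h4
          _ = K * |x| ^ p := hRp
        exact mul_le_mul_of_nonneg_left h5 (rpow_nonneg (abs_nonneg y) p)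
      calc (∫ y in S ∩ A, F y) ≤ ∫ y in S ∩ A, |y| ^ p * (K * |x| ^ p) := by
            refine setIntegral_mono_on hIntA ((hI0.mono_set Set.inter_subset_left).mul_const _)
              (hS.inter hAm) hpt
      _ = (∫ y in S ∩ A, |y| ^ p) * (K * |x| ^ p) := by
            rw [integral_mul_const]
      _ ≤ C₀ * (K * |x| ^ p) := by
            refine mul_le_mul_of_nonneg_right ?_ (by positivity)
            refine setIntegral_mono_set hI0 ?_ (Set.inter_subset_left.eventuallyLE)
            exact ae_restrict_of_ae (ae_of_all _ fun y => rpow_nonneg (abs_nonneg y) p)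
    -- bound on S ∩ B
    have hgtrans : Integrable (fun y => g (x + y)) := hGint.comp_add_left x
    have hboundB : (∫ y in S ∩ B, F y) ≤ (K * |x| ^ p) * C₁ := by
      have hpt : ∀ y ∈ S ∩ B, F y ≤ (K * |x| ^ p) * g (x + y) := by
        rintro y ⟨hyS, hyB⟩
        have h4 : |y| ^ p ≤ R ^ p :=
          rpow_le_rpow_of_nonpos hRpos (le_of_lt hyB) hp0.le
        refine mul_le_mul_of_nonneg_right ?_ (hg0 _)
        calc |y| ^ p ≤ R ^ p := h4
        _ = K * |x| ^ p := hRp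
      calc (∫ y in S ∩ B, F y) ≤ ∫ y in S ∩ B, (K * |x| ^ p) * g (x + y) := by
            refine setIntegral_mono_on hIntB ((hgtrans.const_mul _).integrableOn)
              (hS.inter hBm) hpt
      _ = (K * |x| ^ p) * ∫ y in S ∩ B, g (x + y) := by
            rw [integral_const_mul]
      _ ≤ (K * |x| ^ p) * C₁ := by
            refine mul_le_mul_of_nonneg_left ?_ (by positivity)
            calc (∫ y in S ∩ B, g (x + y)) ≤ ∫ y, g (x + y) :=
                  setIntegral_le_integral hgtrans (ae_of_all _ fun y => hg0 _)
            _ = C₁ := by rw [hC1_def]; exact integral_add_left_eq_self g x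
    have hxppos : 0 < |x| ^ p := rpow_pos_of_pos (lt_trans one_pos hx) p
    rw [hmp]
    calc (∫ y in S, F y) = (∫ y in S ∩ A, F y) + ∫ y in S ∩ B, F y := hsum
    _ ≤ C₀ * (K * |x| ^ p) + (K * |x| ^ p) * C₁ := add_le_add hboundA hboundB
    _ = (K * (C₀ + C₁)) * |x| ^ p := by ring
    _ ≤ c * |x| ^ p := by
          refine mul_le_mul_of_nonneg_right ?_ hxppos.le
          simp only [hc_def]
          linarith
end

section
/- For every H ∈ (0, 1/2) there exists a constant c > 0 such that for all x > 2, ∫_1^∞ y^{2H-2} · min(1, |x - y|^{2H-2}) dy ≤ c · x^{2H-2}. -/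
open MeasureTheory Real Set

lemma aux_g_meas (a : ℝ) : Measurable (fun t : ℝ => min 1 (|t| ^ a)) := by
  measurability

lemma aux_g_nonneg (a t : ℝ) : 0 ≤ min 1 (|t| ^ a) :=
  le_min zero_le_one (Real.rpow_nonneg (abs_nonneg t) a)

lemma aux_g_int {a : ℝ} (ha : a < -1) :
    Integrable (fun t : ℝ => min 1 (|t| ^ a)) := by
  have hmeas := aux_g_meas a
  have hIoi : IntegrableOn (fun t : ℝ => min 1 (|t| ^ a)) (Ioi 0) := by
    have hsplit : Ioc (0:ℝ) 1 ∪ Ioi 1 = Ioi 0 := Ioc_union_Ioi_eq_Ioi zero_le_one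
    rw [← hsplit, integrableOn_union]
    constructor
    · apply Measure.integrableOn_of_bounded (M := 1)
      · exact (measure_Ioc_lt_top).ne
      · exact hmeas.aestronglyMeasurable
      · filter_upwards with t
        rw [Real.norm_eq_abs, abs_of_nonneg (aux_g_nonneg a t)]
        exact min_le_left _ _
    · apply Integrable.mono (integrableOn_Ioi_rpow_of_lt ha one_pos)
        hmeas.aestronglyMeasurable.restrict
      filter_upwards [ae_restrict_mem measurableSet_Ioi] with t ht
      rw [Real.norm_eq_abs, abs_of_nonneg (aux_g_nonneg a t)]
      calc min 1 (|t| ^ a) ≤ |t| ^ a := min_le_right _ _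
        _ = t ^ a := by rw [abs_of_pos (lt_trans one_pos ht)]
        _ ≤ ‖t ^ a‖ := le_abs_self _
  rw [← integrableOn_univ, ← Iic_union_Ioi (a := (0:ℝ)), integrableOn_union]
  refine ⟨?_, hIoi⟩
  rw [← Measure.map_neg_eq_self (volume : Measure ℝ)]
  have m : MeasurableEmbedding fun x : ℝ => -x := (Homeomorph.neg ℝ).measurableEmbedding
  rw [m.integrableOn_map_iff]
  simp_rw [Function.comp_def, abs_neg, neg_preimage, neg_Iic, neg_zero]
  exact Iff.mpr integrableOn_Ici_iff_integrableOn_Ioi hIoi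

theorem integral_rpow_min_le_of_two_lt (H : ℝ) (hH : H ∈ Set.Ioo (0:ℝ) (1/2)) :
    ∃ c : ℝ, 0 < c ∧ ∀ x : ℝ, 2 < x →
      (∫ y in Set.Ici (1:ℝ), y ^ (2 * H - 2) * min 1 (|x - y| ^ (2 * H - 2))) ≤
        c * x ^ (2 * H - 2) := by
  obtain ⟨hH0, hH2⟩ := hH
  set a := 2 * H - 2 with ha_def
  have ha1 : a < -1 := by rw [ha_def]; linarith
  have ha0 : a < 0 := by linarith
  have hg := aux_g_int ha1
  set G := ∫ t : ℝ, min 1 (|t| ^ a) with hG_def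
  set A := ∫ y in Ici (1:ℝ), y ^ a with hA_def
  refine ⟨max 1 ((A + G) / 2 ^ a), lt_of_lt_of_le one_pos (le_max_left _ _), ?_⟩
  intro x hx
  have hx0 : (0:ℝ) < x := by linarith
  have hxh : (0:ℝ) < x / 2 := by linarith
  have hxh1 : (1:ℝ) < x / 2 := by linarith
  have hxa : 0 ≤ (x / 2) ^ a := Real.rpow_nonneg hxh.le _
  have hA_int : IntegrableOn (fun y : ℝ => y ^ a) (Ici 1) :=
    Iff.mpr integrableOn_Ici_iff_integrableOn_Ioi (integrableOn_Ioi_rpow_of_lt ha1 one_pos)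
  have hgx : Integrable (fun y : ℝ => min 1 (|x - y| ^ a)) := hg.comp_sub_left x
  -- integrability of the integrand
  have hmeas_h : Measurable (fun y : ℝ => y ^ a * min 1 (|x - y| ^ a)) := by
    apply Measurable.mul
    · measurability
    · exact (aux_g_meas a).comp (measurable_const.sub measurable_id)
  have hint : IntegrableOn (fun y : ℝ => y ^ a * min 1 (|x - y| ^ a)) (Ici 1) := by
    apply Integrable.mono hA_int hmeas_h.aestronglyMeasurable.restrict
    filter_upwards [ae_restrict_mem measurableSet_Ici] with y hy
    have hy0 : (0:ℝ) < y := lt_of_lt_of_le one_pos hy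
    have h2 : 0 ≤ y ^ a := Real.rpow_nonneg hy0.le _
    rw [Real.norm_eq_abs, Real.norm_eq_abs,
      abs_of_nonneg (mul_nonneg h2 (aux_g_nonneg a _))]
    calc y ^ a * min 1 (|x - y| ^ a) ≤ y ^ a * 1 :=
          mul_le_mul_of_nonneg_left (min_le_left _ _) h2
      _ = y ^ a := mul_one _
      _ ≤ |y ^ a| := le_abs_self _
  -- the key pointwise bound
  have key : ∀ y ∈ Ici (1:ℝ), y ^ a * min 1 (|x - y| ^ a) ≤
      (x / 2) ^ a * (y ^ a + min 1 (|x - y| ^ a)) := by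
    intro y hy
    have hy1 : (1:ℝ) ≤ y := hy
    have hy0 : (0:ℝ) < y := by linarith
    have hm0 : 0 ≤ min 1 (|x - y| ^ a) := aux_g_nonneg a _
    have hya : 0 ≤ y ^ a := Real.rpow_nonneg hy0.le _
    rcases le_or_gt (x / 2) y with h | h
    · have hle : y ^ a ≤ (x / 2) ^ a := Real.rpow_le_rpow_of_nonpos hxh h ha0.le
      calc y ^ a * min 1 (|x - y| ^ a) ≤ (x / 2) ^ a * min 1 (|x - y| ^ a) :=
            mul_le_mul_of_nonneg_right hle hm0
        _ ≤ (x / 2) ^ a * (y ^ a + min 1 (|x - y| ^ a)) :=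
            mul_le_mul_of_nonneg_left (le_add_of_nonneg_left hya) hxa
    · have hxy : x / 2 ≤ |x - y| := by
        rw [abs_of_pos (by linarith : (0:ℝ) < x - y)]; linarith
      have hle : |x - y| ^ a ≤ (x / 2) ^ a := Real.rpow_le_rpow_of_nonpos hxh hxy ha0.le
      have hmin : min 1 (|x - y| ^ a) ≤ (x / 2) ^ a := le_trans (min_le_right _ _) hle
      calc y ^ a * min 1 (|x - y| ^ a) ≤ y ^ a * (x / 2) ^ a :=
            mul_le_mul_of_nonneg_left hmin hya
        _ = (x / 2) ^ a * y ^ a := mul_comm _ _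
        _ ≤ (x / 2) ^ a * (y ^ a + min 1 (|x - y| ^ a)) :=
            mul_le_mul_of_nonneg_left (le_add_of_nonneg_right hm0) hxa
  have hRHSint : IntegrableOn
      (fun y : ℝ => (x / 2) ^ a * (y ^ a + min 1 (|x - y| ^ a))) (Ici 1) :=
    (hA_int.add hgx.integrableOn).const_mul _
  have step1 : (∫ y in Ici (1:ℝ), y ^ a * min 1 (|x - y| ^ a)) ≤
      ∫ y in Ici (1:ℝ), (x / 2) ^ a * (y ^ a + min 1 (|x - y| ^ a)) :=
    setIntegral_mono_on hint hRHSint measurableSet_Ici key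
  have step2 : (∫ y in Ici (1:ℝ), (x / 2) ^ a * (y ^ a + min 1 (|x - y| ^ a)))
      = (x / 2) ^ a * (A + ∫ y in Ici (1:ℝ), min 1 (|x - y| ^ a)) := by
    rw [integral_const_mul, integral_add hA_int hgx.integrableOn]
  have step3 : (∫ y in Ici (1:ℝ), min 1 (|x - y| ^ a)) ≤ G := by
    calc (∫ y in Ici (1:ℝ), min 1 (|x - y| ^ a)) ≤ ∫ y : ℝ, min 1 (|x - y| ^ a) :=
          setIntegral_le_integral hgx (Filter.Eventually.of_forall fun y => aux_g_nonneg a _)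
      _ = G := by
          simp_rw [abs_sub_comm x]
          exact integral_sub_right_eq_self (fun t : ℝ => min 1 (|t| ^ a)) x
  calc (∫ y in Ici (1:ℝ), y ^ a * min 1 (|x - y| ^ a))
      ≤ (x / 2) ^ a * (A + ∫ y in Ici (1:ℝ), min 1 (|x - y| ^ a)) := step1.trans_eq step2
    _ ≤ (x / 2) ^ a * (A + G) :=
        mul_le_mul_of_nonneg_left (add_le_add_right step3 A) hxa
    _ = (A + G) / 2 ^ a * x ^ a := by
        rw [Real.div_rpow hx0.le (by norm_num : (0:ℝ) ≤ 2)]; ring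
    _ ≤ max 1 ((A + G) / 2 ^ a) * x ^ a :=
        mul_le_mul_of_nonneg_right (le_max_right _ _) (Real.rpow_nonneg hx0.le _)
end

section
/- Let α ∈ (1,2) and let G_α(t,x) = t^{-1/α} G(t^{-1/α} x) for t > 0, where G : ℝ → ℝ is a probability density satisfying c₁(1+|z|)^{-1-α} ≤ G(z) ≤ c₂(1+|z|)^{-1-α}. Let λ(x) = c(1+|x|²)^{-λ₀} with λ₀ ∈ (-α/2, α/2), normalized so that ∫λ = 1. Then for every T > 0, sup_{0≤t≤T} sup_{x∈ℝ} (1/λ(x)) ∫_ℝ G_α(t, x-y) λ(y) dy < ∞. -/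
open MeasureTheory Real

/-- Weight-ratio bound: `(1+|y|²)^(-λ₀) ≤ 2^|λ₀| (1+|x-y|)^(2|λ₀|) (1+|x|²)^(-λ₀)`. -/
lemma weight_ratio_bound (lam₀ x y : ℝ) :
    (1 + |y| ^ 2) ^ (-lam₀) ≤
      2 ^ |lam₀| * (1 + |x - y|) ^ (2 * |lam₀|) * (1 + |x| ^ 2) ^ (-lam₀) := by
  set a := |lam₀| with ha
  set A := 1 + |x| ^ 2 with hA
  set B := 1 + |y| ^ 2 with hB
  set D := 1 + |x - y| with hD
  have hA0 : (0:ℝ) < A := by positivity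
  have hB0 : (0:ℝ) < B := by positivity
  have hD1 : (1:ℝ) ≤ D := le_add_of_nonneg_right (abs_nonneg _)
  have hD0 : (0:ℝ) < D := by linarith
  have hxy : |y| - |x| ≤ |x - y| := by
    have := abs_sub_abs_le_abs_sub y x
    rwa [abs_sub_comm y x] at this
  have hyx : |x| - |y| ≤ |x - y| := abs_sub_abs_le_abs_sub x y
  have h1 : B ≤ 2 * D ^ 2 * A := by
    rw [hA, hB, hD]
    have hy2 : |y| ^ 2 ≤ (|x| + |x - y|) ^ 2 :=
      pow_le_pow_left₀ (abs_nonneg y) (by linarith) 2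
    nlinarith [hy2, sq_nonneg (|x| - |x - y|), sq_nonneg (|x| * |x - y|),
      abs_nonneg x, abs_nonneg (x - y)]
  have h2 : A ≤ 2 * D ^ 2 * B := by
    rw [hA, hB, hD]
    have hx2 : |x| ^ 2 ≤ (|y| + |x - y|) ^ 2 :=
      pow_le_pow_left₀ (abs_nonneg x) (by linarith) 2
    nlinarith [hx2, sq_nonneg (|y| - |x - y|), sq_nonneg (|y| * |x - y|),
      abs_nonneg y, abs_nonneg (x - y)]
  have h2D1 : (1:ℝ) ≤ 2 * D ^ 2 := by nlinarith
  have key : (B / A) ^ (-lam₀) ≤ (2 * D ^ 2) ^ a := by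
    rcases le_or_gt 0 (-lam₀) with h | h
    · calc (B / A) ^ (-lam₀) ≤ (2 * D ^ 2) ^ (-lam₀) := by
            apply rpow_le_rpow (by positivity) _ h
            rw [div_le_iff₀ hA0]
            linarith [h1]
        _ ≤ (2 * D ^ 2) ^ a := by
            apply rpow_le_rpow_of_exponent_le h2D1
            exact neg_le_abs lam₀
    · have hAB : A / B ≤ 2 * D ^ 2 := by
        rw [div_le_iff₀ hB0]; linarith [h2]
      have : (B / A) ^ (-lam₀) = (A / B) ^ lam₀ := by
        rw [rpow_neg (by positivity), ← inv_rpow (by positivity), inv_div]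
      rw [this]
      calc (A / B) ^ lam₀ ≤ (2 * D ^ 2) ^ lam₀ :=
            rpow_le_rpow (by positivity) hAB (by linarith)
        _ ≤ (2 * D ^ 2) ^ a := rpow_le_rpow_of_exponent_le h2D1 (le_abs_self lam₀)
  have hBA : B ^ (-lam₀) = (B / A) ^ (-lam₀) * A ^ (-lam₀) := by
    rw [div_rpow hB0.le hA0.le, div_mul_cancel₀]
    exact (rpow_pos_of_pos hA0 _).ne'
  have hDD : (2 * D ^ 2) ^ a = 2 ^ a * D ^ (2 * a) := by
    have hD2 : (D:ℝ) ^ (2:ℕ) = D ^ (2:ℝ) := by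
      rw [← rpow_natCast D 2]; norm_num
    rw [hD2, mul_rpow (by norm_num) (rpow_nonneg hD0.le _), ← rpow_mul hD0.le]
  calc B ^ (-lam₀) = (B / A) ^ (-lam₀) * A ^ (-lam₀) := hBA
    _ ≤ (2 * D ^ 2) ^ a * A ^ (-lam₀) :=
        mul_le_mul_of_nonneg_right key (rpow_nonneg hA0.le _)
    _ = 2 ^ a * D ^ (2 * a) * A ^ (-lam₀) := by rw [hDD]

theorem weighted_heat_kernel_bound (α c₁ c₂ lam₀ c T : ℝ) (G : ℝ → ℝ)
    (hα : α ∈ Set.Ioo (1:ℝ) 2) (hc₁ : 0 < c₁) (hc₁₂ : c₁ ≤ c₂)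
    (hGbound : ∀ z : ℝ, c₁ * (1 + |z|) ^ (-1 - α) ≤ G z ∧ G z ≤ c₂ * (1 + |z|) ^ (-1 - α))
    (hGprob : ∫ z : ℝ, G z = 1)
    (hlam₀ : lam₀ ∈ Set.Ioo (-(α / 2)) (α / 2)) (hc : 0 < c)
    (hnorm : ∫ x : ℝ, c * (1 + |x| ^ 2) ^ (-lam₀) = 1)
    (hT : 0 < T) :
    ∃ M : ℝ, ∀ t ∈ Set.Ioc (0:ℝ) T, ∀ x : ℝ,
      (1 / (c * (1 + |x| ^ 2) ^ (-lam₀))) *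
        (∫ y : ℝ, (t ^ (-(1/α)) * G (t ^ (-(1/α)) * (x - y))) *
          (c * (1 + |y| ^ 2) ^ (-lam₀))) ≤ M := by
  obtain ⟨hα1, hα2⟩ := hα
  obtain ⟨hl1, hl2⟩ := hlam₀
  have hα0 : (0:ℝ) < α := by linarith
  have hc₂ : (0:ℝ) < c₂ := lt_of_lt_of_le hc₁ hc₁₂
  set a := |lam₀| with ha
  have ha0 : 0 ≤ a := abs_nonneg _
  have ha2 : 2 * a < α := by
    rcases abs_cases lam₀ with ⟨h, _⟩ | ⟨h, _⟩ <;> rw [ha, h] <;> linarith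
  set p := -1 - α + 2 * a with hpdef
  have hp : p < -1 := by rw [hpdef]; linarith
  -- integrability of the model profile
  have hF : Integrable (fun v : ℝ => (1 + |v|) ^ p) := by
    have h1 : ((Module.finrank ℝ ℝ : ℝ)) < -p := by
      simp only [Module.finrank_self, Nat.cast_one]; linarith
    have := integrable_one_add_norm (E := ℝ) (μ := (volume : Measure ℝ)) (r := -p) h1
    refine this.congr (Filter.Eventually.of_forall fun v => ?_)
    simp [Real.norm_eq_abs]
  set I := ∫ v : ℝ, (1 + |v|) ^ p with hIdef
  have hI0 : 0 ≤ I := integral_nonneg fun v => rpow_nonneg (by positivity) _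
  set S := T ^ (1 / α) with hSdef
  have hS0 : 0 ≤ S := rpow_nonneg hT.le _
  refine ⟨c₂ * 2 ^ a * (1 + S) ^ (2 * a) * I, ?_⟩
  rintro t ⟨ht0, htT⟩ x
  set s := t ^ (1 / α) with hsdef
  have hs0 : 0 < s := rpow_pos_of_pos ht0 _
  have hsS : s ≤ S := rpow_le_rpow ht0.le htT (by positivity)
  have hts : t ^ (-(1 / α)) = s⁻¹ := by rw [rpow_neg ht0.le]
  set L := (1 + |x| ^ 2) ^ (-lam₀) with hLdef
  have hL0 : 0 < L := rpow_pos_of_pos (by positivity) _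
  set C₀ := c * c₂ * 2 ^ a * (1 + S) ^ (2 * a) * L with hC₀def
  have hC₀0 : 0 ≤ C₀ := by positivity
  -- the dominating function and its integrability
  set g : ℝ → ℝ := fun y => s⁻¹ * (1 + |x - y| * s⁻¹) ^ p with hgdef
  have hgeq : ∀ y : ℝ, g y = s⁻¹ * (1 + |(y - x) * s⁻¹|) ^ p := by
    intro y
    rw [hgdef]
    congr 2
    rw [abs_mul, abs_of_pos (inv_pos.mpr hs0), abs_sub_comm]
  have hgint : Integrable g := by
    have h1 : Integrable (fun u : ℝ => (1 + |u * s⁻¹|) ^ p) :=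
      hF.comp_mul_right' (inv_ne_zero hs0.ne')
    have h2 : Integrable (fun y : ℝ => (1 + |(y - x) * s⁻¹|) ^ p) := h1.comp_sub_right x
    have h3 := h2.const_mul s⁻¹
    exact h3.congr (Filter.Eventually.of_forall fun y => (hgeq y).symm)
  -- pointwise bound
  have hmono : ∀ y : ℝ,
      (t ^ (-(1/α)) * G (t ^ (-(1/α)) * (x - y))) * (c * (1 + |y| ^ 2) ^ (-lam₀))
        ≤ C₀ * g y := by
    intro y
    rw [hts]
    set v := |x - y| * s⁻¹ with hvdef
    have hv0 : 0 ≤ v := by positivity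
    have habs : |s⁻¹ * (x - y)| = v := by
      rw [abs_mul, abs_of_pos (inv_pos.mpr hs0), mul_comm]
    have key1 : G (s⁻¹ * (x - y)) ≤ c₂ * (1 + v) ^ (-1 - α) := by
      have := (hGbound (s⁻¹ * (x - y))).2
      rwa [habs] at this
    have key2 : (1 + |y| ^ 2) ^ (-lam₀) ≤ 2 ^ a * ((1 + S) ^ (2 * a) * (1 + v) ^ (2 * a)) * L := by
      have hr := weight_ratio_bound lam₀ x y
      have hscale : (1 + |x - y|) ^ (2 * a) ≤ (1 + S) ^ (2 * a) * (1 + v) ^ (2 * a) := by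
        have hsv : |x - y| = s * v := by
          rw [hvdef, mul_comm |x - y| s⁻¹, ← mul_assoc, mul_inv_cancel₀ hs0.ne', one_mul]
        have hle : 1 + |x - y| ≤ (1 + S) * (1 + v) := by
          rw [hsv]
          nlinarith [mul_le_mul_of_nonneg_right hsS hv0]
        calc (1 + |x - y|) ^ (2 * a) ≤ ((1 + S) * (1 + v)) ^ (2 * a) :=
              rpow_le_rpow (by positivity) hle (by positivity)
          _ = (1 + S) ^ (2 * a) * (1 + v) ^ (2 * a) :=
              mul_rpow (by positivity) (by positivity)
      calc (1 + |y| ^ 2) ^ (-lam₀)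
          ≤ 2 ^ a * (1 + |x - y|) ^ (2 * a) * L := hr
        _ ≤ 2 ^ a * ((1 + S) ^ (2 * a) * (1 + v) ^ (2 * a)) * L := by
            apply mul_le_mul_of_nonneg_right _ hL0.le
            exact mul_le_mul_of_nonneg_left hscale (by positivity)
    have key3 : (1 + v) ^ (-1 - α) * (1 + v) ^ (2 * a) = (1 + v) ^ p := by
      rw [hpdef, rpow_add (by positivity)]
    have hGnn : 0 ≤ G (s⁻¹ * (x - y)) := le_trans (by positivity) (hGbound _).1
    have step : (s⁻¹ * G (s⁻¹ * (x - y))) * (c * (1 + |y| ^ 2) ^ (-lam₀))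
        ≤ (s⁻¹ * (c₂ * (1 + v) ^ (-1 - α))) *
          (c * (2 ^ a * ((1 + S) ^ (2 * a) * (1 + v) ^ (2 * a)) * L)) := by
      apply mul_le_mul
      · exact mul_le_mul_of_nonneg_left key1 (by positivity)
      · exact mul_le_mul_of_nonneg_left key2 hc.le
      · positivity
      · positivity
    calc (s⁻¹ * G (s⁻¹ * (x - y))) * (c * (1 + |y| ^ 2) ^ (-lam₀))
        ≤ (s⁻¹ * (c₂ * (1 + v) ^ (-1 - α))) *
          (c * (2 ^ a * ((1 + S) ^ (2 * a) * (1 + v) ^ (2 * a)) * L)) := step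
      _ = C₀ * g y := by
          rw [hC₀def, hgdef]
          simp only [← hvdef]
          rw [← key3]; ring
  have hnn : ∀ y : ℝ,
      0 ≤ (t ^ (-(1/α)) * G (t ^ (-(1/α)) * (x - y))) * (c * (1 + |y| ^ 2) ^ (-lam₀)) := by
    intro y
    have hGnn : 0 ≤ G (t ^ (-(1/α)) * (x - y)) := le_trans (by positivity) (hGbound _).1
    have h0 : 0 ≤ t ^ (-(1/α)) := rpow_nonneg ht0.le _
    positivity
  -- comparison of integrals
  have hint_le :
      (∫ y : ℝ, (t ^ (-(1/α)) * G (t ^ (-(1/α)) * (x - y))) * (c * (1 + |y| ^ 2) ^ (-lam₀)))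
        ≤ C₀ * I := by
    have h1 : (∫ y : ℝ, (t ^ (-(1/α)) * G (t ^ (-(1/α)) * (x - y))) *
        (c * (1 + |y| ^ 2) ^ (-lam₀))) ≤ ∫ y : ℝ, C₀ * g y :=
      integral_mono_of_nonneg (Filter.Eventually.of_forall hnn)
        (hgint.const_mul C₀) (Filter.Eventually.of_forall hmono)
    have h2 : (∫ y : ℝ, C₀ * g y) = C₀ * ∫ y : ℝ, g y := integral_const_mul _ _
    have h3 : (∫ y : ℝ, g y) = I := by
      have e1 : (∫ y : ℝ, g y) = ∫ y : ℝ, s⁻¹ * (1 + |(y - x) * s⁻¹|) ^ p := by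
        exact integral_congr_ae (Filter.Eventually.of_forall hgeq)
      rw [e1, integral_const_mul]
      have e2 : (∫ y : ℝ, (1 + |(y - x) * s⁻¹|) ^ p)
          = ∫ u : ℝ, (1 + |u * s⁻¹|) ^ p :=
        integral_sub_right_eq_self (fun u => (1 + |u * s⁻¹|) ^ p) x
      rw [e2]
      have e3 : (∫ u : ℝ, (1 + |u * s⁻¹|) ^ p) = |s⁻¹⁻¹| • ∫ v : ℝ, (1 + |v|) ^ p :=
        Measure.integral_comp_mul_right (fun v => (1 + |v|) ^ p) s⁻¹
      rw [e3, inv_inv, abs_of_pos hs0, smul_eq_mul, ← hIdef, ← mul_assoc,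
        inv_mul_cancel₀ hs0.ne', one_mul]
    calc (∫ y : ℝ, (t ^ (-(1/α)) * G (t ^ (-(1/α)) * (x - y))) *
          (c * (1 + |y| ^ 2) ^ (-lam₀))) ≤ ∫ y : ℝ, C₀ * g y := h1
      _ = C₀ * I := by rw [h2, h3]
  -- conclude
  have hcL : 0 < c * L := by positivity
  calc (1 / (c * L)) * (∫ y : ℝ, (t ^ (-(1/α)) * G (t ^ (-(1/α)) * (x - y))) *
        (c * (1 + |y| ^ 2) ^ (-lam₀)))
      ≤ (1 / (c * L)) * (C₀ * I) := by
        apply mul_le_mul_of_nonneg_left hint_le (by positivity)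
    _ = c₂ * 2 ^ a * (1 + S) ^ (2 * a) * I := by
        rw [hC₀def]; field_simp
end

section
/- Let α ∈ (1,2), q ≥ 1, λ₀ ∈ (-((1+α)q-1)/2, ((1+α)q-1)/2), and λ(x) = c(1+|x|²)^{-λ₀}. Let G_α(t,x) = t^{-1/α} G(t^{-1/α}x) with G as above. Then for all t ∈ (0,T], sup_{x∈ℝ} (1/λ(x)) ∫_ℝ G_α(t,x-y)^q λ(y) dy ≤ C t^{-(q-1)/α} for a constant C depending on λ₀, q, α, T. -/
open MeasureTheory Real

private lemma key_ineq (x y : ℝ) : 1 + |y| ^ 2 ≤ 2 * (1 + |x - y|) ^ 2 * (1 + |x| ^ 2) := by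
  have h1 : |y| ≤ |x| + |x - y| := by
    have h : y = x - (x - y) := by ring
    calc |y| = |x - (x - y)| := by rw [← h]
      _ ≤ |x| + |x - y| := abs_sub _ _
  nlinarith [abs_nonneg x, abs_nonneg (x - y), abs_nonneg y, sq_nonneg (|x| - |x - y|),
    sq_nonneg (|x| * |x - y|), sq_nonneg (|x| + |x - y|)]

private lemma weight_ratio (lam₀ x y : ℝ) :
    (1 + |y| ^ 2) ^ (-lam₀) ≤
      (1 + |x| ^ 2) ^ (-lam₀) * (2 * (1 + |x - y|) ^ 2) ^ |lam₀| := by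
  have hy : (0:ℝ) < 1 + |y| ^ 2 := by positivity
  have hx : (0:ℝ) < 1 + |x| ^ 2 := by positivity
  have hw : (0:ℝ) < 2 * (1 + |x - y|) ^ 2 := by positivity
  rcases le_total lam₀ 0 with h | h
  · rw [abs_of_nonpos h]
    rw [← Real.mul_rpow hx.le hw.le]
    exact Real.rpow_le_rpow hy.le (by nlinarith [key_ineq x y]) (neg_nonneg.2 h)
  · rw [abs_of_nonneg h]
    have hkey : 1 + |x| ^ 2 ≤ (1 + |y| ^ 2) * (2 * (1 + |x - y|) ^ 2) := by
      have hk := key_ineq y x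
      rw [abs_sub_comm y x] at hk
      nlinarith [hk]
    have hA : (1 + |x| ^ 2) ^ lam₀ ≤
        (1 + |y| ^ 2) ^ lam₀ * (2 * (1 + |x - y|) ^ 2) ^ lam₀ := by
      rw [← Real.mul_rpow hy.le hw.le]
      exact Real.rpow_le_rpow hx.le hkey h
    have pa : (0:ℝ) < (1 + |y| ^ 2) ^ lam₀ := Real.rpow_pos_of_pos hy _
    have pb : (0:ℝ) < (1 + |x| ^ 2) ^ lam₀ := Real.rpow_pos_of_pos hx _
    have pw : (0:ℝ) < (2 * (1 + |x - y|) ^ 2) ^ lam₀ := Real.rpow_pos_of_pos hw _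
    rw [Real.rpow_neg hy.le, Real.rpow_neg hx.le, inv_eq_one_div, inv_eq_one_div,
      div_mul_eq_mul_div, one_mul, div_le_div_iff₀ pa pb]
    nlinarith [hA, pa, pw]

theorem weighted_heat_kernel_Lq_bound (α q lam₀ c c₁ c₂ T : ℝ) (G : ℝ → ℝ)
    (hα : α ∈ Set.Ioo (1:ℝ) 2) (hq : 1 ≤ q)
    (hlam₀ : lam₀ ∈ Set.Ioo (-(((1 + α) * q - 1) / 2)) (((1 + α) * q - 1) / 2))
    (hc : 0 < c) (hc₁ : 0 < c₁) (hc₁₂ : c₁ ≤ c₂)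
    (hGbound : ∀ z : ℝ, c₁ * (1 + |z|) ^ (-1 - α) ≤ G z ∧ G z ≤ c₂ * (1 + |z|) ^ (-1 - α))
    (hT : 0 < T) :
    ∃ C : ℝ, 0 < C ∧ ∀ t ∈ Set.Ioc (0:ℝ) T, ∀ x : ℝ,
      (1 / (c * (1 + |x| ^ 2) ^ (-lam₀))) *
        (∫ y : ℝ, (t ^ (-(1/α)) * G (t ^ (-(1/α)) * (x - y))) ^ q *
          (c * (1 + |y| ^ 2) ^ (-lam₀))) ≤ C * t ^ (-((q - 1) / α)) := by
  obtain ⟨hα1, hα2⟩ := hα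
  have hα0 : (0:ℝ) < α := by linarith
  have hc₂ : (0:ℝ) < c₂ := lt_of_lt_of_le hc₁ hc₁₂
  have hq0 : (0:ℝ) < q := lt_of_lt_of_le one_pos hq
  set μ : ℝ := |lam₀| with hμdef
  have hμ0 : 0 ≤ μ := abs_nonneg _
  have hμlt : μ < ((1 + α) * q - 1) / 2 := abs_lt.2 ⟨hlam₀.1, hlam₀.2⟩
  have hr : 2 * μ - (1 + α) * q < -1 := by linarith
  have hint : Integrable (fun u : ℝ => (1 + |u|) ^ (2 * μ - (1 + α) * q)) := by
    have h := integrable_one_add_norm (E := ℝ) (μ := volume) (r := (1 + α) * q - 2 * μ)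
      (by rw [Module.finrank_self]; push_cast; linarith)
    have : (fun u : ℝ => (1 + ‖u‖) ^ (-((1 + α) * q - 2 * μ)))
        = fun u : ℝ => (1 + |u|) ^ (2 * μ - (1 + α) * q) := by
      funext u; rw [Real.norm_eq_abs]; ring_nf
    rwa [this] at h
  set I : ℝ := ∫ u : ℝ, (1 + |u|) ^ (2 * μ - (1 + α) * q) with hIdef
  have hI0 : 0 ≤ I :=
    integral_nonneg fun u => Real.rpow_nonneg (by positivity) _
  set M : ℝ := max 1 (T ^ (1/α)) with hMdef
  have hM1 : (1:ℝ) ≤ M := le_max_left _ _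
  set D : ℝ := c₂ ^ q * 2 ^ μ * M ^ (2 * μ) with hDdef
  have hM0 : (0:ℝ) < M := lt_of_lt_of_le one_pos hM1
  have hD0 : 0 < D := by positivity
  clear_value μ I M D
  refine ⟨D * I + 1, by positivity, ?_⟩
  rintro t ⟨ht0, htT⟩ x
  set s : ℝ := t ^ (-(1/α)) with hsdef
  have hs0 : 0 < s := Real.rpow_pos_of_pos ht0 _
  have hts : t ^ (1/α) * s = 1 := by
    rw [hsdef, ← Real.rpow_add ht0]; simp
  clear_value s
  have htT' : t ^ (1/α) ≤ T ^ (1/α) :=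
    Real.rpow_le_rpow ht0.le htT (by positivity)
  have hMT : t ^ (1/α) ≤ M := hMdef ▸ le_trans htT' (le_max_right _ _)
  have hwx : (0:ℝ) < c * (1 + |x| ^ 2) ^ (-lam₀) := by positivity
  -- pointwise bound
  have hpt : ∀ y : ℝ,
      (s * G (s * (x - y))) ^ q * (c * (1 + |y| ^ 2) ^ (-lam₀)) ≤
        (c * (1 + |x| ^ 2) ^ (-lam₀)) * (D * t ^ (-(q/α))) *
          (1 + s * |x - y|) ^ (2 * μ - (1 + α) * q) := by
    intro y
    have hz : |s * (x - y)| = s * |x - y| := by rw [abs_mul, abs_of_pos hs0]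
    have hP : (0:ℝ) < 1 + s * |x - y| := by positivity
    have hGz : 0 ≤ G (s * (x - y)) :=
      le_trans (by positivity) (hGbound (s * (x - y))).1
    have hsq : s ^ q = t ^ (-(q/α)) := by
      rw [hsdef, ← Real.rpow_mul ht0.le]; congr 1; ring
    have h1 : (s * G (s * (x - y))) ^ q ≤
        t ^ (-(q/α)) * c₂ ^ q * (1 + s * |x - y|) ^ ((-1 - α) * q) := by
      have step : (s * G (s * (x - y))) ^ q ≤
          (s * (c₂ * (1 + s * |x - y|) ^ (-1 - α))) ^ q := by
        apply Real.rpow_le_rpow (mul_nonneg hs0.le hGz) _ hq0.le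
        apply mul_le_mul_of_nonneg_left _ hs0.le
        rw [← hz]; exact (hGbound (s * (x - y))).2
      calc (s * G (s * (x - y))) ^ q ≤
            (s * (c₂ * (1 + s * |x - y|) ^ (-1 - α))) ^ q := step
        _ = t ^ (-(q/α)) * c₂ ^ q * (1 + s * |x - y|) ^ ((-1 - α) * q) := by
            rw [Real.mul_rpow hs0.le (by positivity),
              Real.mul_rpow hc₂.le (by positivity),
              ← Real.rpow_mul hP.le, hsq]
            ring
    have hstretch : (1 + |x - y|) ^ (2 * μ) ≤
        M ^ (2 * μ) * (1 + s * |x - y|) ^ (2 * μ) := by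
      rw [← Real.mul_rpow hM0.le hP.le]
      apply Real.rpow_le_rpow (by positivity) _ (by positivity)
      have hMs : 1 ≤ M * s := by
        have h0 := mul_nonneg (sub_nonneg.2 hMT) hs0.le
        have h1 : (M - t ^ (1/α)) * s = M * s - 1 := by rw [sub_mul, hts]
        linarith
      have hw1 : |x - y| ≤ M * (s * |x - y|) := by
        have h0 := mul_le_mul_of_nonneg_right hMs (abs_nonneg (x - y))
        rw [one_mul, mul_assoc] at h0
        exact h0
      have hexpand : M * (1 + s * |x - y|) = M + M * (s * |x - y|) := by ring
      linarith [hw1, hM1, hexpand]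
    have hwr : (1 + |y| ^ 2) ^ (-lam₀) ≤
        (1 + |x| ^ 2) ^ (-lam₀) * (2 ^ μ * (1 + |x - y|) ^ (2 * μ)) := by
      have h := weight_ratio lam₀ x y
      rw [← hμdef] at h
      have hrw : (2 * (1 + |x - y|) ^ 2) ^ μ = 2 ^ μ * (1 + |x - y|) ^ (2 * μ) := by
        rw [Real.mul_rpow (by norm_num) (by positivity), ← Real.rpow_natCast (1 + |x - y|) 2,
          ← Real.rpow_mul (by positivity)]
        norm_num
      rw [hrw] at h
      exact h
    have h2 : c * (1 + |y| ^ 2) ^ (-lam₀) ≤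
        (c * (1 + |x| ^ 2) ^ (-lam₀)) * (2 ^ μ * M ^ (2 * μ)) *
          (1 + s * |x - y|) ^ (2 * μ) := by
      have hx0 : (0:ℝ) ≤ (1 + |x| ^ 2) ^ (-lam₀) := by positivity
      calc c * (1 + |y| ^ 2) ^ (-lam₀)
          ≤ c * ((1 + |x| ^ 2) ^ (-lam₀) * (2 ^ μ * (1 + |x - y|) ^ (2 * μ))) :=
            mul_le_mul_of_nonneg_left hwr hc.le
        _ ≤ c * ((1 + |x| ^ 2) ^ (-lam₀) *
              (2 ^ μ * (M ^ (2 * μ) * (1 + s * |x - y|) ^ (2 * μ)))) := by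
            apply mul_le_mul_of_nonneg_left _ hc.le
            apply mul_le_mul_of_nonneg_left _ hx0
            exact mul_le_mul_of_nonneg_left hstretch (by positivity)
        _ = (c * (1 + |x| ^ 2) ^ (-lam₀)) * (2 ^ μ * M ^ (2 * μ)) *
              (1 + s * |x - y|) ^ (2 * μ) := by ring
    have hnn1 : (0:ℝ) ≤ c * (1 + |y| ^ 2) ^ (-lam₀) := by positivity
    have hnn2 : (0:ℝ) ≤ (s * G (s * (x - y))) ^ q := Real.rpow_nonneg
      (mul_nonneg hs0.le hGz) _
    calc (s * G (s * (x - y))) ^ q * (c * (1 + |y| ^ 2) ^ (-lam₀))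
        ≤ (t ^ (-(q/α)) * c₂ ^ q * (1 + s * |x - y|) ^ ((-1 - α) * q)) *
            ((c * (1 + |x| ^ 2) ^ (-lam₀)) * (2 ^ μ * M ^ (2 * μ)) *
              (1 + s * |x - y|) ^ (2 * μ)) := by
          apply mul_le_mul h1 h2 hnn1 (by positivity)
      _ = (c * (1 + |x| ^ 2) ^ (-lam₀)) * (D * t ^ (-(q/α))) *
            (1 + s * |x - y|) ^ (2 * μ - (1 + α) * q) := by
          have hexp : 2 * μ - (1 + α) * q = (-1 - α) * q + 2 * μ := by ring
          rw [hexp, Real.rpow_add hP, hDdef]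
          ring
  -- integrability of the majorant
  have hmaj : Integrable (fun y : ℝ =>
      (c * (1 + |x| ^ 2) ^ (-lam₀)) * (D * t ^ (-(q/α))) *
        (1 + s * |x - y|) ^ (2 * μ - (1 + α) * q)) := by
    apply Integrable.const_mul
    have h1 : Integrable (fun u : ℝ => (1 + |s * u|) ^ (2 * μ - (1 + α) * q)) :=
      hint.comp_mul_left' hs0.ne'
    have h2 := h1.comp_sub_left x
    have heq : (fun y : ℝ => (1 + |s * (x - y)|) ^ (2 * μ - (1 + α) * q))
        = fun y : ℝ => (1 + s * |x - y|) ^ (2 * μ - (1 + α) * q) := by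
      funext y; rw [abs_mul, abs_of_pos hs0]
    rwa [heq] at h2
  -- integral of majorant
  have hval : (∫ y : ℝ, (1 + s * |x - y|) ^ (2 * μ - (1 + α) * q)) = t ^ (1/α) * I := by
    have heq : (fun y : ℝ => (1 + s * |x - y|) ^ (2 * μ - (1 + α) * q))
        = fun y : ℝ => (fun u : ℝ => (1 + |s * u|) ^ (2 * μ - (1 + α) * q)) (x - y) := by
      funext y; simp only [abs_mul, abs_of_pos hs0]
    rw [heq, integral_sub_left_eq_self
      (fun u : ℝ => (1 + |s * u|) ^ (2 * μ - (1 + α) * q)) volume x,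
      MeasureTheory.Measure.integral_comp_mul_left
        (fun v : ℝ => (1 + |v|) ^ (2 * μ - (1 + α) * q)) s,
      smul_eq_mul, abs_of_pos (inv_pos.2 hs0)]
    have hsinv : s⁻¹ = t ^ (1/α) := by rw [hsdef, Real.rpow_neg ht0.le, inv_inv]
    rw [hsinv, ← hIdef]
  -- bound the integral
  have hbound : (∫ y : ℝ, (s * G (s * (x - y))) ^ q * (c * (1 + |y| ^ 2) ^ (-lam₀)))
      ≤ (c * (1 + |x| ^ 2) ^ (-lam₀)) * (D * t ^ (-(q/α))) * (t ^ (1/α) * I) := by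
    calc (∫ y : ℝ, (s * G (s * (x - y))) ^ q * (c * (1 + |y| ^ 2) ^ (-lam₀)))
        ≤ ∫ y : ℝ, (c * (1 + |x| ^ 2) ^ (-lam₀)) * (D * t ^ (-(q/α))) *
            (1 + s * |x - y|) ^ (2 * μ - (1 + α) * q) := by
          apply integral_mono_of_nonneg _ hmaj (Filter.Eventually.of_forall hpt)
          apply Filter.Eventually.of_forall
          intro y
          have hGz : 0 ≤ G (s * (x - y)) :=
            le_trans (by positivity) (hGbound (s * (x - y))).1
          exact mul_nonneg (Real.rpow_nonneg (mul_nonneg hs0.le hGz) _) (by positivity)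
      _ = (c * (1 + |x| ^ 2) ^ (-lam₀)) * (D * t ^ (-(q/α))) *
            ∫ y : ℝ, (1 + s * |x - y|) ^ (2 * μ - (1 + α) * q) := MeasureTheory.integral_const_mul _ _
      _ = (c * (1 + |x| ^ 2) ^ (-lam₀)) * (D * t ^ (-(q/α))) * (t ^ (1/α) * I) := by
          rw [hval]
  -- conclude
  have hcancel : (1 / (c * (1 + |x| ^ 2) ^ (-lam₀))) *
      ((c * (1 + |x| ^ 2) ^ (-lam₀)) * (D * t ^ (-(q/α))) * (t ^ (1/α) * I))
      = D * I * (t ^ (-(q/α)) * t ^ (1/α)) := by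
    field_simp
  have hpow : t ^ (-(q/α)) * t ^ (1/α) = t ^ (-((q - 1) / α)) := by
    rw [← Real.rpow_add ht0]
    congr 1
    field_simp
    ring
  calc (1 / (c * (1 + |x| ^ 2) ^ (-lam₀))) *
        (∫ y : ℝ, (s * G (s * (x - y))) ^ q * (c * (1 + |y| ^ 2) ^ (-lam₀)))
      ≤ (1 / (c * (1 + |x| ^ 2) ^ (-lam₀))) *
        ((c * (1 + |x| ^ 2) ^ (-lam₀)) * (D * t ^ (-(q/α))) * (t ^ (1/α) * I)) :=
        mul_le_mul_of_nonneg_left hbound (by positivity)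
    _ = D * I * t ^ (-((q - 1) / α)) := by rw [hcancel, hpow]
    _ ≤ (D * I + 1) * t ^ (-((q - 1) / α)) := by
        apply mul_le_mul_of_nonneg_right (by linarith) (Real.rpow_nonneg ht0.le _)
end

section
/- Let H ∈ (0,1/2) and define R(x,z) = ((1+|z|)/(1+|x-z|))^{2-2H}. Then sup_{t∈[0,T]} sup_{z∈ℝ} ∫_ℝ min(1, |x|^{2H-2}) R(t^{1/α} x, z) dx < ∞ for any α ∈ (1,2) and T > 0. -/
open MeasureTheory Real

theorem scaled_weight_ratio_integral_bound (H α T : ℝ)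
    (hH : H ∈ Set.Ioo (0:ℝ) (1/2)) (hα : α ∈ Set.Ioo (1:ℝ) 2) (hT : 0 < T) :
    ∃ M : ℝ, ∀ t ∈ Set.Icc (0:ℝ) T, ∀ z : ℝ,
      (∫ x : ℝ, min 1 (|x| ^ (2 * H - 2)) *
        ((1 + |z|) / (1 + |t ^ (1/α) * x - z|)) ^ (2 - 2 * H)) ≤ M := by
  obtain ⟨hH0, hH2⟩ := hH
  set β : ℝ := 2 - 2 * H with hβdef
  have hβ1 : (1:ℝ) < β := by rw [hβdef]; linarith
  have hβ0 : (0:ℝ) < β := by linarith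
  have hexp : 2 * H - 2 = -β := by rw [hβdef]; ring
  set base : ℝ → ℝ := fun u => (1 + |u|) ^ (-β) with hbase_def
  have hbase_nonneg : ∀ u, 0 ≤ base u := fun u => rpow_nonneg (by positivity) _
  have hbase_meas : Measurable base :=
    (measurable_const.add measurable_abs).pow measurable_const
  have hbase_int : Integrable base := by
    have h := integrable_one_add_norm (E := ℝ) (μ := volume) (r := β) (by simpa using hβ1)
    simpa [hbase_def, Real.norm_eq_abs, Real.rpow_neg] using h
  set J : ℝ := ∫ u, base u with hJdef
  have hJ0 : 0 ≤ J := integral_nonneg hbase_nonneg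
  set c : ℝ := T ^ (1/α) with hcdef
  have hc0 : 0 ≤ c := rpow_nonneg hT.le _
  refine ⟨2 ^ (2*β) * J + 2 ^ β * c ^ (β - 1) * J, ?_⟩
  intro t ht z
  set s : ℝ := t ^ (1/α) with hsdef
  have hs0 : 0 ≤ s := rpow_nonneg ht.1 _
  have hα0 : (0:ℝ) < α := lt_trans one_pos hα.1
  have hsc : s ≤ c := rpow_le_rpow ht.1 ht.2 (div_nonneg zero_le_one hα0.le)
  -- the integrand and its dominating function
  set f : ℝ → ℝ := fun x => min 1 (|x| ^ (2 * H - 2)) *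
      ((1 + |z|) / (1 + |s * x - z|)) ^ β with hfdef
  set g : ℝ → ℝ := fun x => 2 ^ (2*β) * base x + (2*s) ^ β * base (s * x - z) with hgdef
  have hf_nonneg : ∀ x, 0 ≤ f x := by
    intro x
    apply mul_nonneg
    · exact le_min zero_le_one (rpow_nonneg (abs_nonneg x) _)
    · exact rpow_nonneg (div_nonneg (by positivity) (by positivity)) _
  -- min 1 (|x|^(-β)) ≤ 2^β * base x
  have hmin_le : ∀ x : ℝ, min 1 (|x| ^ (2 * H - 2)) ≤ 2 ^ β * base x := by
    intro x
    rw [hexp]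
    rcases le_total (|x|) 1 with hx | hx
    · have h1 : (2:ℝ) ^ (-β) ≤ (1 + |x|) ^ (-β) :=
        rpow_le_rpow_of_nonpos (by positivity) (by linarith) (by linarith)
      have h2 : (2:ℝ) ^ β * 2 ^ (-β) = 1 := by
        rw [← Real.rpow_add two_pos]; simp
      calc min 1 (|x| ^ (-β)) ≤ 1 := min_le_left _ _
        _ = 2 ^ β * 2 ^ (-β) := h2.symm
        _ ≤ 2 ^ β * base x := by
            apply mul_le_mul_of_nonneg_left h1 (rpow_nonneg (by norm_num) _)
    · have hx0 : (0:ℝ) < |x| := by linarith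
      have h1 : (1 + |x|) ^ (-β) ≥ (2 * |x|) ^ (-β) :=
        rpow_le_rpow_of_nonpos (by linarith) (by linarith) (by linarith)
      have h2 : ((2:ℝ) * |x|) ^ (-β) = 2 ^ (-β) * |x| ^ (-β) :=
        Real.mul_rpow (by norm_num) (abs_nonneg x)
      have h3 : (2:ℝ) ^ β * (2 ^ (-β) * |x| ^ (-β)) = |x| ^ (-β) := by
        rw [← mul_assoc, ← Real.rpow_add two_pos]; simp
      calc min 1 (|x| ^ (-β)) ≤ |x| ^ (-β) := min_le_right _ _
        _ = 2 ^ β * (2 ^ (-β) * |x| ^ (-β)) := h3.symm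
        _ = 2 ^ β * (2 * |x|) ^ (-β) := by rw [h2]
        _ ≤ 2 ^ β * base x := by
            apply mul_le_mul_of_nonneg_left h1 (rpow_nonneg (by norm_num) _)
  -- key pointwise estimate
  have hpt : ∀ x : ℝ, f x ≤ g x := by
    intro x
    have hD0 : (0:ℝ) < 1 + |s * x - z| := by positivity
    have hZ0 : (0:ℝ) < 1 + |z| := by positivity
    have hterm2_nonneg : 0 ≤ (2*s) ^ β * base (s * x - z) :=
      mul_nonneg (rpow_nonneg (by linarith) _) (hbase_nonneg _)
    have hterm1_nonneg : 0 ≤ (2:ℝ) ^ (2*β) * base x :=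
      mul_nonneg (rpow_nonneg (by norm_num) _) (hbase_nonneg _)
    rcases le_or_gt (s * |x|) ((1 + |z|) / 2) with hA | hB
    · -- ratio is at most 2
      have htri : |z| ≤ |s * x - z| + s * |x| := by
        have h1 : (s * x - z) - s * x = -z := by ring
        have h2 : |(s * x - z) - s * x| ≤ |s * x - z| + |s * x| := abs_sub _ _
        rw [h1, abs_neg, abs_mul, abs_of_nonneg hs0] at h2
        exact h2
      have hratio : (1 + |z|) / (1 + |s * x - z|) ≤ 2 := by
        rw [div_le_iff₀ hD0]; linarith
      have hratioβ : ((1 + |z|) / (1 + |s * x - z|)) ^ β ≤ 2 ^ β :=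
        rpow_le_rpow (div_nonneg hZ0.le hD0.le) hratio hβ0.le
      have hmin_nonneg : 0 ≤ min 1 (|x| ^ (2 * H - 2)) :=
        le_min zero_le_one (rpow_nonneg (abs_nonneg x) _)
      have h22 : (2:ℝ) ^ β * 2 ^ β = 2 ^ (2*β) := by
        rw [← Real.rpow_add two_pos]; ring_nf
      calc f x ≤ min 1 (|x| ^ (2 * H - 2)) * 2 ^ β :=
            mul_le_mul_of_nonneg_left hratioβ hmin_nonneg
        _ ≤ (2 ^ β * base x) * 2 ^ β :=
            mul_le_mul_of_nonneg_right (hmin_le x) (rpow_nonneg (by norm_num) _)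
        _ = 2 ^ (2*β) * base x := by rw [← h22]; ring
        _ ≤ g x := le_add_of_nonneg_right hterm2_nonneg
    · -- region where s|x| is large
      have hs' : 0 < s := by
        rcases hs0.eq_or_lt with h | h
        · exfalso; rw [← h] at hB; simp at hB; linarith [abs_nonneg z]
        · exact h
      have hx' : 0 < |x| := by
        by_contra h
        push_neg at h
        have hx0 : |x| = 0 := le_antisymm h (abs_nonneg x)
        rw [hx0, mul_zero] at hB
        linarith [abs_nonneg z]
      have hR0 : 0 < (1 + |z|) / (2 * s) := by positivity
      have hRx : (1 + |z|) / (2 * s) < |x| := by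
        rw [div_lt_iff₀ (by positivity)]; linarith
      have key1 : min 1 (|x| ^ (2 * H - 2)) ≤ |x| ^ (-β) := by
        rw [hexp]; exact min_le_right _ _
      have key2 : |x| ^ (-β) ≤ ((1 + |z|) / (2 * s)) ^ (-β) :=
        rpow_le_rpow_of_nonpos hR0 hRx.le (by linarith)
      have hZβ : (0:ℝ) < (1 + |z|) ^ β := rpow_pos_of_pos hZ0 _
      have hDβ : (0:ℝ) < (1 + |s * x - z|) ^ β := rpow_pos_of_pos hD0 _
      have key3 : ((1 + |z|) / (2 * s)) ^ (-β) = (2*s) ^ β / (1 + |z|) ^ β := by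
        rw [Real.rpow_neg (div_nonneg hZ0.le (by positivity)),
          Real.div_rpow hZ0.le (by positivity), inv_div]
      have hratioβ : ((1 + |z|) / (1 + |s * x - z|)) ^ β
          = (1 + |z|) ^ β / (1 + |s * x - z|) ^ β :=
        Real.div_rpow hZ0.le hD0.le β
      have hbase_eq : base (s * x - z) = ((1 + |s * x - z|) ^ β)⁻¹ := by
        rw [hbase_def]; exact Real.rpow_neg hD0.le β
      have hchain : f x ≤ (2*s) ^ β / (1 + |z|) ^ β *
          ((1 + |z|) ^ β / (1 + |s * x - z|) ^ β) := by
        rw [hfdef]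
        simp only
        rw [hratioβ]
        apply mul_le_mul_of_nonneg_right _ (le_of_lt (div_pos hZβ hDβ))
        calc min 1 (|x| ^ (2 * H - 2)) ≤ |x| ^ (-β) := key1
          _ ≤ ((1 + |z|) / (2 * s)) ^ (-β) := key2
          _ = (2*s) ^ β / (1 + |z|) ^ β := key3
      have heq : (2*s) ^ β / (1 + |z|) ^ β * ((1 + |z|) ^ β / (1 + |s * x - z|) ^ β)
          = (2*s) ^ β * base (s * x - z) := by
        rw [hbase_eq]; field_simp
      calc f x ≤ (2*s) ^ β * base (s * x - z) := by rw [← heq]; exact hchain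
        _ ≤ g x := le_add_of_nonneg_left hterm1_nonneg
  -- measurability and integrability
  have hf_meas : AEStronglyMeasurable f volume := by
    apply Measurable.aestronglyMeasurable
    apply Measurable.mul
    · exact measurable_const.min (measurable_abs.pow measurable_const)
    · apply Measurable.pow _ measurable_const
      apply Measurable.div measurable_const
      exact measurable_const.add ((measurable_id.const_mul s).sub measurable_const).abs
  rcases hs0.eq_or_lt with hs_eq | hs_pos
  · -- s = 0 : second term of g vanishes
    have hzero : ∀ x : ℝ, (2*s) ^ β * base (s * x - z) = 0 := by
      intro x
      rw [← hs_eq, mul_zero, Real.zero_rpow hβ0.ne', zero_mul]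
    have hg_eq : g = fun x => 2 ^ (2*β) * base x := by
      funext x; rw [hgdef]; simp only; rw [hzero x, add_zero]
    have hg_int : Integrable g := by rw [hg_eq]; exact hbase_int.const_mul _
    have hf_int : Integrable f := by
      apply hg_int.mono' hf_meas
      filter_upwards with x
      rw [Real.norm_eq_abs, abs_of_nonneg (hf_nonneg x)]
      exact hpt x
    calc (∫ x, f x) ≤ ∫ x, g x := integral_mono hf_int hg_int hpt
      _ = 2 ^ (2*β) * J := by simp only [hg_eq]; rw [integral_const_mul]
      _ ≤ 2 ^ (2*β) * J + 2 ^ β * c ^ (β - 1) * J := by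
          have : (0:ℝ) ≤ 2 ^ β * c ^ (β - 1) * J :=
            mul_nonneg (mul_nonneg (rpow_nonneg (by norm_num) _) (rpow_nonneg hc0 _)) hJ0
          linarith
  · -- s > 0 : change of variables
    have hsne : s ≠ 0 := hs_pos.ne'
    have hshift_int : Integrable (fun u => base (u - z)) := hbase_int.comp_sub_right z
    have hcomp_int : Integrable (fun x => base (s * x - z)) := by
      have h := (MeasureTheory.integrable_comp_mul_left_iff
        (fun u => base (u - z)) hsne).2 hshift_int
      exact h
    have hg_int : Integrable g :=
      (hbase_int.const_mul _).add (hcomp_int.const_mul _)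
    have hf_int : Integrable f := by
      apply hg_int.mono' hf_meas
      filter_upwards with x
      rw [Real.norm_eq_abs, abs_of_nonneg (hf_nonneg x)]
      exact hpt x
    have hcov : (∫ x, base (s * x - z)) = s⁻¹ * J := by
      have h1 : (∫ x, base (s * x - z))
          = |s⁻¹| • ∫ u, base (u - z) :=
        MeasureTheory.Measure.integral_comp_mul_left (fun u => base (u - z)) s
      rw [h1, MeasureTheory.integral_sub_right_eq_self base z,
        abs_of_pos (inv_pos.mpr hs_pos), smul_eq_mul]
    have hsplit : (∫ x, g x) = 2 ^ (2*β) * J + (2*s) ^ β * (s⁻¹ * J) := by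
      rw [hgdef]
      rw [integral_add (hbase_int.const_mul _) (hcomp_int.const_mul _),
        integral_const_mul, integral_const_mul, hcov]
    have hpow : (2*s) ^ β * s⁻¹ = 2 ^ β * s ^ (β - 1) := by
      have h1 : s ^ (β - 1) = s ^ β * s⁻¹ := by
        rw [show β - 1 = β + (-1) by ring, Real.rpow_add hs_pos, Real.rpow_neg_one]
      rw [h1, Real.mul_rpow (by norm_num) hs0]
      ring
    have hmono : s ^ (β - 1) ≤ c ^ (β - 1) := rpow_le_rpow hs0 hsc (by linarith)
    calc (∫ x, f x) ≤ ∫ x, g x := integral_mono hf_int hg_int hpt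
      _ = 2 ^ (2*β) * J + 2 ^ β * s ^ (β - 1) * J := by
          rw [hsplit, ← mul_assoc, hpow]
      _ ≤ 2 ^ (2*β) * J + 2 ^ β * c ^ (β - 1) * J := by
          apply add_le_add_right
          apply mul_le_mul_of_nonneg_right _ hJ0
          exact mul_le_mul_of_nonneg_left hmono (rpow_nonneg (by norm_num) _)
end
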